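/- Let R > 0 and let f, g be smooth functions, 1-periodic in t, defined on an open neighbourhood of {s+it : |s| ≤ R} and satisfying there ∂_s f = −∂_t g and ∂_t f = ∂_s g (equivalently, F := f − ig is holomorphic in z = s+it), with period P := ∫₀¹ g(0,t) dt and co-period S̃ := −∫₀¹ f(0,t) dt. Let ‖F‖_{L²} := (∫_{−R}^{R} ∫₀¹ (f(s,t)² + g(s,t)²) dt ds)^{1/2}. Then | ‖F‖_{L²} − (2R(P² + S̃²))^{1/2} | ≤ 12 · max{‖f(R,·) + S̃‖_{L²(S¹)}, ‖f(−R,·) + S̃‖_{L²(S¹)}} + 12 · max{‖g(R,·) − P‖_{L²(S¹)}, ‖g(−R,·) − P‖_{L²(S¹)}}. -/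

import Mathlib

open MeasureTheory

open Set intervalIntegral Metric

section HarmonicCylinderAux

lemma hc_leibniz {φ ψ : ℝ × ℝ → ℝ} {V : Set (ℝ × ℝ)} (hV : IsOpen V) {x₀ : ℝ}
    (hx : ∀ t ∈ Icc (0:ℝ) 1, (x₀, t) ∈ V)
    (hφ : ContinuousOn φ V) (hψ : ContinuousOn ψ V)
    (hd : ∀ p ∈ V, HasDerivAt (fun s => φ (s, p.2)) (ψ p) p.1) :
    HasDerivAt (fun s => ∫ t in (0:ℝ)..1, φ (s, t)) (∫ t in (0:ℝ)..1, ψ (x₀, t)) x₀ := by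
  have hK : IsCompact ({x₀} ×ˢ Icc (0:ℝ) 1) := isCompact_singleton.prod isCompact_Icc
  have hKV : {x₀} ×ˢ Icc (0:ℝ) 1 ⊆ V := by
    rintro ⟨a, b⟩ ⟨ha, hb⟩
    simp only [mem_singleton_iff] at ha
    subst ha; exact hx b hb
  obtain ⟨ε, hε, hthick⟩ := hK.exists_thickening_subset_open hV hKV
  have hsub : ∀ x t : ℝ, |x - x₀| < ε → t ∈ Icc (0:ℝ) 1 → (x, t) ∈ V := by
    intro x t hxd ht
    apply hthick
    rw [Metric.mem_thickening_iff]
    refine ⟨(x₀, t), ⟨rfl, ht⟩, ?_⟩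
    rw [Prod.dist_eq]
    simp [Real.dist_eq, hxd, hε]
  have hKc : IsCompact (Icc (x₀ - ε/2) (x₀ + ε/2) ×ˢ Icc (0:ℝ) 1) :=
    isCompact_Icc.prod isCompact_Icc
  have hKcV : Icc (x₀ - ε/2) (x₀ + ε/2) ×ˢ Icc (0:ℝ) 1 ⊆ V := by
    rintro ⟨a, b⟩ ⟨ha, hb⟩
    apply hsub a b _ hb
    rw [abs_sub_lt_iff]
    constructor <;> [linarith [ha.2]; linarith [ha.1]]
  obtain ⟨C, hC⟩ := hKc.exists_bound_of_continuousOn (hψ.mono hKcV)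
  have hmem : ∀ x : ℝ, x ∈ ball x₀ (ε/2) → ∀ t ∈ Icc (0:ℝ) 1, (x, t) ∈ V := by
    intro x hxb t ht
    exact hsub x t (lt_trans (by simpa [Real.dist_eq] using hxb) (by linarith)) ht
  have hcont : ∀ x : ℝ, x ∈ ball x₀ (ε/2) →
      ContinuousOn (fun t => φ (x, t)) (Icc (0:ℝ) 1) := by
    intro x hxb
    apply hφ.comp (Continuous.continuousOn (by fun_prop))
    intro t ht; exact hmem x hxb t ht
  have hIoc : uIoc (0:ℝ) 1 ⊆ Icc (0:ℝ) 1 := by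
    rw [uIoc_of_le (by norm_num)]; exact Ioc_subset_Icc_self
  have h := intervalIntegral.hasDerivAt_integral_of_dominated_loc_of_deriv_le
      (F := fun x t => φ (x, t)) (F' := fun x t => ψ (x, t)) (x₀ := x₀)
      (a := (0:ℝ)) (b := 1) (μ := volume) (bound := fun _ => |C|)
      (Metric.ball_mem_nhds x₀ (half_pos hε))
      ?_ ?_ ?_ ?_ ?_ ?_
  · exact h.2
  · filter_upwards [Metric.ball_mem_nhds x₀ (half_pos hε)] with x hxb
    exact (ContinuousOn.mono (hcont x hxb) hIoc).aestronglyMeasurable measurableSet_uIoc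
  · apply ContinuousOn.intervalIntegrable
    rw [uIcc_of_le (by norm_num : (0:ℝ) ≤ 1)]
    exact hcont x₀ (mem_ball_self (half_pos hε))
  · have : ContinuousOn (fun t => ψ (x₀, t)) (Icc (0:ℝ) 1) := by
      apply hψ.comp (Continuous.continuousOn (by fun_prop))
      intro t ht; exact hmem x₀ (mem_ball_self (half_pos hε)) t ht
    exact (this.mono hIoc).aestronglyMeasurable measurableSet_uIoc
  · apply Filter.Eventually.of_forall
    intro t ht x hxb
    have : (x, t) ∈ Icc (x₀ - ε/2) (x₀ + ε/2) ×ˢ Icc (0:ℝ) 1 := by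
      constructor
      · simp only [mem_ball, Real.dist_eq] at hxb
        rw [abs_sub_lt_iff] at hxb
        exact ⟨by linarith [hxb.1], by linarith [hxb.2]⟩
      · exact hIoc ht
    exact le_trans (hC _ this) (le_abs_self C)
  · exact intervalIntegrable_const
  · apply Filter.Eventually.of_forall
    intro t ht x hxb
    exact hd (x, t) (hmem x hxb t (hIoc ht))

noncomputable def hcps (H : ℝ × ℝ → ℝ) (p : ℝ × ℝ) : ℝ := fderiv ℝ H p (1, 0)
noncomputable def hcpt (H : ℝ × ℝ → ℝ) (p : ℝ × ℝ) : ℝ := fderiv ℝ H p (0, 1)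

section basic
variable {U : Set (ℝ × ℝ)} (hU : IsOpen U) {H : ℝ × ℝ → ℝ} (hH : ContDiffOn ℝ (⊤ : ℕ∞) H U)

include hU hH

lemma hc_contDiffAt {n : ℕ} : ∀ p ∈ U, ContDiffAt ℝ n H p := fun p hp =>
  (hH.contDiffAt (hU.mem_nhds hp)).of_le (by exact_mod_cast le_top)

lemma hcps_contDiffAt {n : ℕ} : ∀ p ∈ U, ContDiffAt ℝ n (hcps H) p := by
  intro p hp
  have h1 : ContDiffAt ℝ n (fderiv ℝ H) p :=
    (hc_contDiffAt hU hH (n := n + 1) p hp).fderiv_right (by norm_cast)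
  exact h1.clm_apply contDiffAt_const

lemma hcpt_contDiffAt {n : ℕ} : ∀ p ∈ U, ContDiffAt ℝ n (hcpt H) p := by
  intro p hp
  have h1 : ContDiffAt ℝ n (fderiv ℝ H) p :=
    (hc_contDiffAt hU hH (n := n + 1) p hp).fderiv_right (by norm_cast)
  exact h1.clm_apply contDiffAt_const

lemma hc_slice_s : ∀ p ∈ U, HasDerivAt (fun s => H (s, p.2)) (hcps H p) p.1 := by
  rintro ⟨p1, p2⟩ hp
  have hD : HasFDerivAt H (fderiv ℝ H (p1, p2)) (p1, p2) :=
    ((hc_contDiffAt hU hH (n := 1) _ hp).differentiableAt (by norm_num)).hasFDerivAt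
  have hline : HasDerivAt (fun s : ℝ => (s, p2)) ((1:ℝ), (0:ℝ)) p1 :=
    (hasDerivAt_id p1).prodMk (hasDerivAt_const p1 p2)
  exact hD.comp_hasDerivAt p1 hline

lemma hc_slice_t : ∀ p ∈ U, HasDerivAt (fun t => H (p.1, t)) (hcpt H p) p.2 := by
  rintro ⟨p1, p2⟩ hp
  have hD : HasFDerivAt H (fderiv ℝ H (p1, p2)) (p1, p2) :=
    ((hc_contDiffAt hU hH (n := 1) _ hp).differentiableAt (by norm_num)).hasFDerivAt
  have hline : HasDerivAt (fun t : ℝ => (p1, t)) ((0:ℝ), (1:ℝ)) p2 :=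
    (hasDerivAt_const p2 p1).prodMk (hasDerivAt_id p2)
  exact hD.comp_hasDerivAt p2 hline

lemma hc_contOn : ContinuousOn H U := hH.continuousOn

lemma hcps_contOn : ContinuousOn (hcps H) U := fun p hp =>
  ((hcps_contDiffAt hU hH (n := 0) p hp).continuousAt).continuousWithinAt

lemma hcpt_contOn : ContinuousOn (hcpt H) U := fun p hp =>
  ((hcpt_contDiffAt hU hH (n := 0) p hp).continuousAt).continuousWithinAt

/-- mixed partials commute -/
lemma hc_symm : ∀ p ∈ U, hcps (hcpt H) p = hcpt (hcps H) p := by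
  intro p hp
  have hd : ContDiffAt ℝ 1 (fderiv ℝ H) p :=
    (hc_contDiffAt hU hH (n := 2) p hp).fderiv_right (by norm_cast)
  have hD : HasFDerivAt (fderiv ℝ H) (fderiv ℝ (fderiv ℝ H) p) p :=
    (hd.differentiableAt (by norm_num)).hasFDerivAt
  have hev : ∀ w : ℝ × ℝ, HasFDerivAt (fun q => fderiv ℝ H q w)
      (((ContinuousLinearMap.apply ℝ ℝ w).comp (fderiv ℝ (fderiv ℝ H) p))) p := by
    intro w
    exact (ContinuousLinearMap.apply ℝ ℝ w).hasFDerivAt.comp p hD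
  have hsymm : IsSymmSndFDerivAt ℝ H p :=
    (hc_contDiffAt hU hH (n := 2) p hp).isSymmSndFDerivAt (by simp)
  have e1 : hcps (hcpt H) p = fderiv ℝ (fderiv ℝ H) p (1, 0) (0, 1) := by
    unfold hcps hcpt
    rw [(hev (0, 1)).fderiv]
    rfl
  have e2 : hcpt (hcps H) p = fderiv ℝ (fderiv ℝ H) p (0, 1) (1, 0) := by
    unfold hcps hcpt
    rw [(hev (1, 0)).fderiv]
    rfl
  rw [e1, e2, hsymm (1,0) (0,1)]

end basic

lemma hcps_neg (H : ℝ × ℝ → ℝ) : hcps (fun q => -(H q)) = fun p => -(hcps H p) := by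
  funext p; unfold hcps; rw [fderiv_fun_neg]; simp

lemma hcpt_neg (H : ℝ × ℝ → ℝ) : hcpt (fun q => -(H q)) = fun p => -(hcpt H p) := by
  funext p; unfold hcpt; rw [fderiv_fun_neg]; simp

lemma hcps_add_const (H : ℝ × ℝ → ℝ) (c : ℝ) :
    hcps (fun q => H q + c) = hcps H := by
  funext p; unfold hcps; rw [fderiv_add_const]

lemma hcpt_add_const (H : ℝ × ℝ → ℝ) (c : ℝ) :
    hcpt (fun q => H q + c) = hcpt H := by
  funext p; unfold hcpt; rw [fderiv_add_const]

/-- first component of a CR pair is harmonic -/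
lemma hc_harm_pair {U : Set (ℝ × ℝ)} (hU : IsOpen U) {F G : ℝ × ℝ → ℝ}
    (hG : ContDiffOn ℝ (⊤ : ℕ∞) G U)
    (h1 : ∀ p ∈ U, hcps F p = -hcpt G p) (h2 : ∀ p ∈ U, hcpt F p = hcps G p) :
    ∀ p ∈ U, hcps (hcps F) p + hcpt (hcpt F) p = 0 := by
  intro p hp
  have e1 : hcps (hcps F) p = -(hcps (hcpt G) p) := by
    have hev : (hcps F) =ᶠ[nhds p] (fun q => -(hcpt G q)) :=
      Filter.eventually_of_mem (hU.mem_nhds hp) h1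
    have h' : fderiv ℝ (hcps F) p = fderiv ℝ (fun q => -(hcpt G q)) p := hev.fderiv_eq
    show fderiv ℝ (hcps F) p (1, 0) = -(fderiv ℝ (hcpt G) p (1, 0))
    rw [h', fderiv_fun_neg]
    simp
  have e2 : hcpt (hcpt F) p = hcpt (hcps G) p := by
    have hev : (hcpt F) =ᶠ[nhds p] (fun q => hcps G q) :=
      Filter.eventually_of_mem (hU.mem_nhds hp) h2
    have h' : fderiv ℝ (hcpt F) p = fderiv ℝ (hcps G) p := hev.fderiv_eq
    show fderiv ℝ (hcpt F) p (0, 1) = fderiv ℝ (hcps G) p (0, 1)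
    rw [h']
  rw [e1, e2, hc_symm hU hG p hp]
  ring

/-- Cauchy–Schwarz for interval integrals of continuous functions. -/
lemma hc_cs {a b : ℝ} (hab : a ≤ b) {k : ℝ → ℝ} (hk : Continuous k) :
    (∫ x in a..b, k x) ^ 2 ≤ (b - a) * ∫ x in a..b, (k x) ^ 2 := by
  rcases eq_or_lt_of_le hab with rfl | hlt
  · simp
  · set I := ∫ x in a..b, k x with hI
    have h0 : 0 ≤ ∫ x in a..b, ((b - a) * k x - I) ^ 2 :=
      intervalIntegral.integral_nonneg hab (fun u _ => sq_nonneg _)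
    have hexp : ∀ x : ℝ, ((b - a) * k x - I) ^ 2
        = (b - a) ^ 2 * (k x) ^ 2 - 2 * (b - a) * I * k x + I ^ 2 := by
      intro x; ring
    have hint1 : IntervalIntegrable (fun x => (k x) ^ 2) volume a b :=
      (hk.pow 2).intervalIntegrable a b
    have hint2 : IntervalIntegrable k volume a b := hk.intervalIntegrable a b
    have he : ∫ x in a..b, ((b - a) * k x - I) ^ 2
        = (b - a) ^ 2 * (∫ x in a..b, (k x) ^ 2) - 2 * (b - a) * I * I + (b - a) * I ^ 2 := by
      simp_rw [hexp]
      rw [intervalIntegral.integral_add, intervalIntegral.integral_sub,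
        intervalIntegral.integral_const_mul, intervalIntegral.integral_const_mul,
        intervalIntegral.integral_const]
      · simp only [smul_eq_mul]
        try ring
      · exact hint1.const_mul _
      · exact hint2.const_mul _
      · exact (hint1.const_mul _).sub (hint2.const_mul _)
      · exact intervalIntegrable_const
    rw [he] at h0
    nlinarith [sq_nonneg I, sq_nonneg (b - a)]

/-- Poincaré inequality on the circle with constant 1. -/
lemma hc_poincare {k k' : ℝ → ℝ} (hk : ∀ t, HasDerivAt k (k' t) t)
    (hk'c : Continuous k') (hper : ∀ t, k (t + 1) = k t)
    (hmean : (∫ t in (0:ℝ)..1, k t) = 0) :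
    (∫ t in (0:ℝ)..1, (k t) ^ 2) ≤ ∫ t in (0:ℝ)..1, (k' t) ^ 2 := by
  have hkc : Continuous k := by
    rw [continuous_iff_continuousAt]; exact fun t => (hk t).continuousAt
  -- derivative is periodic
  have hper' : ∀ t, k' (t + 1) = k' t := by
    intro t
    have h1 : HasDerivAt (fun x => k (x + 1)) (k' (t + 1)) t := by
      simpa [Function.comp_def] using (hk (t + 1)).comp t ((hasDerivAt_id t).add_const 1)
    have h2 : HasDerivAt (fun x => k (x + 1)) (k' t) t := by
      have : (fun x => k (x + 1)) = k := funext fun x => hper x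
      rw [this]; exact hk t
    exact h1.unique h2
  -- existence of a zero
  have hzero : ∃ t₀ ∈ Icc (0:ℝ) 1, k t₀ = 0 := by
    by_contra hno
    push_neg at hno
    have hsign : (∀ t ∈ Icc (0:ℝ) 1, 0 < k t) ∨ (∀ t ∈ Icc (0:ℝ) 1, k t < 0) := by
      by_contra hcon
      push_neg at hcon
      obtain ⟨⟨t1, ht1, ht1'⟩, ⟨t2, ht2, ht2'⟩⟩ := hcon
      have h1 : k t1 < 0 := lt_of_le_of_ne ht1' (hno t1 ht1)
      have h2 : 0 < k t2 := lt_of_le_of_ne ht2' (Ne.symm (hno t2 ht2))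
      rcases le_total t1 t2 with h | h
      · obtain ⟨c, hc, hkc0⟩ := intermediate_value_Icc h hkc.continuousOn
          (⟨le_of_lt h1, le_of_lt h2⟩ : (0:ℝ) ∈ Icc (k t1) (k t2))
        exact hno c ⟨le_trans ht1.1 hc.1, le_trans hc.2 ht2.2⟩ hkc0
      · obtain ⟨c, hc, hkc0⟩ := intermediate_value_Icc' h hkc.continuousOn
          (⟨le_of_lt h1, le_of_lt h2⟩ : (0:ℝ) ∈ Icc (k t1) (k t2))
        exact hno c ⟨le_trans ht2.1 hc.1, le_trans hc.2 ht1.2⟩ hkc0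
    rcases hsign with hpos | hneg
    · have : 0 < ∫ t in (0:ℝ)..1, k t :=
        intervalIntegral.intervalIntegral_pos_of_pos_on (hkc.intervalIntegrable 0 1)
          (fun x hx => hpos x ⟨le_of_lt hx.1, le_of_lt hx.2⟩) one_pos
      linarith [this, hmean.ge]
    · have : 0 < ∫ t in (0:ℝ)..1, -k t :=
        intervalIntegral.intervalIntegral_pos_of_pos_on ((hkc.neg).intervalIntegrable 0 1)
          (fun x hx => neg_pos.mpr (hneg x ⟨le_of_lt hx.1, le_of_lt hx.2⟩)) one_pos
      rw [intervalIntegral.integral_neg, hmean] at this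
      linarith
  obtain ⟨t₀, ht₀, hkt₀⟩ := hzero
  set C := ∫ t in t₀..t₀ + 1, (k' t) ^ 2 with hCdef
  have hperk'sq : Function.Periodic (fun t => (k' t) ^ 2) 1 := fun t => by simp only [hper']
  have hpersq : Function.Periodic (fun t => (k t) ^ 2) 1 := fun t => by simp only [hper]
  have hC : C = ∫ t in (0:ℝ)..1, (k' t) ^ 2 := by
    have := hperk'sq.intervalIntegral_add_eq t₀ 0
    simpa using this
  have hCnn : 0 ≤ C := intervalIntegral.integral_nonneg (by linarith) (fun u _ => sq_nonneg _)
  have hpoint : ∀ t ∈ Icc t₀ (t₀ + 1), (k t) ^ 2 ≤ C := by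
    intro t ht
    have hft : ∫ x in t₀..t, k' x = k t - k t₀ :=
      intervalIntegral.integral_eq_sub_of_hasDerivAt (fun x _ => hk x)
        (hk'c.intervalIntegrable _ _)
    have hkt : k t = ∫ x in t₀..t, k' x := by rw [hft, hkt₀]; ring
    have hcs : (∫ x in t₀..t, k' x) ^ 2 ≤ (t - t₀) * ∫ x in t₀..t, (k' x) ^ 2 :=
      hc_cs ht.1 hk'c
    have hmono : ∫ x in t₀..t, (k' x) ^ 2 ≤ C := by
      apply intervalIntegral.integral_mono_interval le_rfl ht.1 ht.2
        (Filter.Eventually.of_forall (fun x => sq_nonneg _))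
        ((hk'c.pow 2).intervalIntegrable _ _)
    have hnn : 0 ≤ ∫ x in t₀..t, (k' x) ^ 2 :=
      intervalIntegral.integral_nonneg ht.1 (fun u _ => sq_nonneg _)
    have ht1 : t - t₀ ≤ 1 := by linarith [ht.2]
    calc (k t) ^ 2 = (∫ x in t₀..t, k' x) ^ 2 := by rw [hkt]
      _ ≤ (t - t₀) * ∫ x in t₀..t, (k' x) ^ 2 := hcs
      _ ≤ 1 * C := by
          apply mul_le_mul ht1 hmono hnn zero_le_one
      _ = C := one_mul C
  have hint : ∫ t in (0:ℝ)..1, (k t) ^ 2 = ∫ t in t₀..t₀ + 1, (k t) ^ 2 := by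
    have := hpersq.intervalIntegral_add_eq t₀ 0
    simpa using this.symm
  rw [hint, ← hC]
  calc ∫ t in t₀..t₀ + 1, (k t) ^ 2 ≤ ∫ _t in t₀..t₀ + 1, C := by
        apply intervalIntegral.integral_mono_on (by linarith)
          ((hkc.pow 2).intervalIntegrable _ _) intervalIntegrable_const hpoint
    _ = C := by simp

lemma hc_comparison {R : ℝ} (hR : 0 < R) {u u₁ u₂ : ℝ → ℝ}
    (hd1 : ∀ s ∈ Icc (-R) R, HasDerivAt u (u₁ s) s)
    (hd2 : ∀ s ∈ Icc (-R) R, HasDerivAt u₁ (u₂ s) s)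
    (hnn : ∀ s ∈ Icc (-R) R, 0 ≤ u s)
    (hui : ∀ s ∈ Icc (-R) R, 2 * u s ≤ u₂ s) :
    (∫ s in (-R)..R, u s) ≤ 2 * max (u R) (u (-R)) := by
  set c := Real.sqrt 2 with hcdef
  have hc2 : c ^ 2 = 2 := Real.sq_sqrt (by norm_num)
  have hc1 : 1 ≤ c := by nlinarith [Real.sqrt_nonneg 2]
  have hc : 0 < c := by linarith
  set M := max (u R) (u (-R)) with hMdef
  have hRmem : R ∈ Icc (-R) R := ⟨by linarith, le_rfl⟩
  have hRmem' : -R ∈ Icc (-R) R := ⟨le_rfl, by linarith⟩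
  have hM : 0 ≤ M := le_trans (hnn R hRmem) (le_max_left _ _)
  set D := Real.cosh (c * R) with hDdef
  have hD : 0 < D := Real.cosh_pos (x := c * R)
  set φ := fun s => M * Real.cosh (c * s) / D with hφdef
  set φ₁ := fun s => M * (Real.sinh (c * s) * c) / D with hφ₁def
  have hin : ∀ s : ℝ, HasDerivAt (fun x : ℝ => c * x) c s := by
    intro s
    simpa using (hasDerivAt_id s).const_mul c
  have hφd : ∀ s : ℝ, HasDerivAt φ (φ₁ s) s := by
    intro s
    have h1 : HasDerivAt (fun s : ℝ => Real.cosh (c * s)) (Real.sinh (c * s) * c) s := by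
      simpa [Function.comp_def] using (Real.hasDerivAt_cosh (c * s)).comp s (hin s)
    exact (h1.const_mul M).div_const D
  have hφd1 : ∀ s : ℝ, HasDerivAt φ₁ (2 * φ s) s := by
    intro s
    have h1 : HasDerivAt (fun s : ℝ => Real.sinh (c * s)) (Real.cosh (c * s) * c) s := by
      simpa [Function.comp_def] using (Real.hasDerivAt_sinh (c * s)).comp s (hin s)
    have h2 := ((h1.mul_const c).const_mul M).div_const D
    refine h2.congr_deriv ?_
    have hcc : Real.cosh (c * s) * c * c = Real.cosh (c * s) * 2 := by
      rw [mul_assoc]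
      congr 1
      nlinarith [hc2]
    show _ = 2 * (M * Real.cosh (c * s) / D)
    rw [hcc]
    ring
  have hucont : ContinuousOn u (Icc (-R) R) :=
    fun s hs => (hd1 s hs).continuousAt.continuousWithinAt
  have hφcont : Continuous φ := by
    apply Continuous.div_const
    exact continuous_const.mul (Real.continuous_cosh.comp (continuous_const.mul continuous_id))
  -- the key pointwise bound
  have key : ∀ s ∈ Icc (-R) R, u s ≤ φ s := by
    by_contra hcon
    push_neg at hcon
    obtain ⟨s₁, hs₁, hlt⟩ := hcon
    set w := fun s => φ s - u s with hwdef
    have hwcont : ContinuousOn w (Icc (-R) R) := (hφcont.continuousOn).sub hucont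
    obtain ⟨x₀, hx₀, hmin⟩ := isCompact_Icc.exists_isMinOn
      (nonempty_Icc.mpr (by linarith)) hwcont
    have hwx₀ : w x₀ < 0 := lt_of_le_of_lt (hmin hs₁) (by simp only [hwdef]; linarith)
    have hφR : φ R = M := by
      simp only [hφdef, hDdef]; field_simp
    have hφR' : φ (-R) = M := by
      simp only [hφdef, hDdef]
      rw [mul_neg, Real.cosh_neg]
      field_simp
    have hwR : 0 ≤ w R := by
      simp only [hwdef, hφR, hMdef]
      linarith [le_max_left (u R) (u (-R))]
    have hwR' : 0 ≤ w (-R) := by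
      simp only [hwdef, hφR', hMdef]
      linarith [le_max_right (u R) (u (-R))]
    have hx₀Ioo : x₀ ∈ Ioo (-R) R := by
      rcases eq_or_lt_of_le hx₀.1 with h1 | h1
      · exact absurd (h1 ▸ hwR') (not_le.mpr hwx₀)
      rcases eq_or_lt_of_le hx₀.2 with h2 | h2
      · rw [← h2] at hwR
        exact absurd hwR (not_le.mpr hwx₀)
      exact ⟨h1, h2⟩
    set w₁ := fun s => φ₁ s - u₁ s with hw₁def
    have hw1 : ∀ s ∈ Icc (-R) R, HasDerivAt w (w₁ s) s :=
      fun s hs => (hφd s).sub (hd1 s hs)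
    have hw2 : HasDerivAt w₁ (2 * φ x₀ - u₂ x₀) x₀ :=
      (hφd1 x₀).sub (hd2 x₀ hx₀)
    have hIccnhds : Icc (-R) R ∈ nhds x₀ := Icc_mem_nhds hx₀Ioo.1 hx₀Ioo.2
    have hlocmin : IsLocalMin w x₀ := hmin.isLocalMin hIccnhds
    have hw₁x₀ : w₁ x₀ = 0 := hlocmin.hasDerivAt_eq_zero (hw1 x₀ hx₀)
    have hneg : 2 * φ x₀ - u₂ x₀ < 0 := by
      have := hui x₀ hx₀
      simp only [hwdef] at hwx₀
      linarith
    rw [hasDerivAt_iff_tendsto_slope] at hw2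
    have hev : ∀ᶠ z in nhdsWithin x₀ {x₀}ᶜ, slope w₁ x₀ z < 0 :=
      hw2.eventually (Iio_mem_nhds hneg)
    have hev' : ∀ᶠ z in nhdsWithin x₀ (Ioi x₀), w₁ z < 0 := by
      have h1 : ∀ᶠ z in nhdsWithin x₀ (Ioi x₀), slope w₁ x₀ z < 0 :=
        hev.filter_mono (nhdsWithin_mono x₀ (fun z hz => ne_of_gt hz))
      have h2 : ∀ᶠ z in nhdsWithin x₀ (Ioi x₀), x₀ < z := eventually_mem_nhdsWithin
      filter_upwards [h1, h2] with z hz1 hz2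
      rw [slope_def_field, hw₁x₀, sub_zero] at hz1
      rcases div_neg_iff.mp hz1 with ⟨h, h'⟩ | ⟨h, h'⟩
      · linarith [sub_pos.mpr hz2]
      · exact h
    obtain ⟨b', hb'mem, hsub⟩ := mem_nhdsGT_iff_exists_Ioo_subset.mp hev'
    set b := min ((x₀ + b') / 2) ((x₀ + R) / 2) with hbdef
    have hx₀b : x₀ < b := by
      apply lt_min
      · simp only [mem_Ioi] at hb'mem; linarith
      · linarith [hx₀Ioo.2]
    have hbb' : b < b' := by
      simp only [mem_Ioi] at hb'mem
      calc b ≤ (x₀ + b') / 2 := min_le_left _ _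
        _ < b' := by linarith
    have hbR : b < R := by
      calc b ≤ (x₀ + R) / 2 := min_le_right _ _
        _ < R := by linarith [hx₀Ioo.2]
    have hbIcc : Icc x₀ b ⊆ Icc (-R) R := fun z hz =>
      ⟨le_trans hx₀.1 hz.1, le_trans hz.2 (le_of_lt hbR)⟩
    have hanti : StrictAntiOn w (Icc x₀ b) := by
      apply strictAntiOn_of_deriv_neg (convex_Icc x₀ b) (hwcont.mono hbIcc)
      intro z hz
      rw [interior_Icc] at hz
      have hzIcc : z ∈ Icc (-R) R := hbIcc ⟨le_of_lt hz.1, le_of_lt hz.2⟩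
      rw [(hw1 z hzIcc).deriv]
      exact hsub ⟨hz.1, lt_trans hz.2 hbb'⟩
    have hwb : w b < w x₀ :=
      hanti (left_mem_Icc.mpr (le_of_lt hx₀b)) (right_mem_Icc.mpr (le_of_lt hx₀b)) hx₀b
    have : w x₀ ≤ w b := hmin (hbIcc (right_mem_Icc.mpr (le_of_lt hx₀b)))
    linarith
  -- integrate the bound
  have hint : (∫ s in (-R)..R, u s) ≤ ∫ s in (-R)..R, φ s := by
    apply intervalIntegral.integral_mono_on (by linarith)
    · apply ContinuousOn.intervalIntegrable
      rwa [uIcc_of_le (by linarith : -R ≤ R)]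
    · exact hφcont.intervalIntegrable _ _
    · exact key
  have hΦd : ∀ s : ℝ, HasDerivAt (fun s => M * Real.sinh (c * s) / (c * D)) (φ s) s := by
    intro s
    have h1 : HasDerivAt (fun s : ℝ => Real.sinh (c * s)) (Real.cosh (c * s) * c) s := by
      simpa [Function.comp_def] using (Real.hasDerivAt_sinh (c * s)).comp s (hin s)
    have h2 := (h1.const_mul M).div_const (c * D)
    refine h2.congr_deriv ?_
    show _ = M * Real.cosh (c * s) / D
    field_simp
  have hval : (∫ s in (-R)..R, φ s) = 2 * M * Real.sinh (c * R) / (c * D) := by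
    rw [intervalIntegral.integral_eq_sub_of_hasDerivAt (fun s _ => hΦd s)
      (hφcont.intervalIntegrable _ _)]
    rw [mul_neg, Real.sinh_neg]
    field_simp
    ring
  have hsinh : Real.sinh (c * R) < D := hDdef ▸ Real.sinh_lt_cosh (c * R)
  have hsinhnn : 0 ≤ Real.sinh (c * R) := by
    rw [Real.sinh_nonneg_iff]  -- may not exist; fallback below
    positivity
  have hfin : 2 * M * Real.sinh (c * R) / (c * D) ≤ 2 * M := by
    rw [div_le_iff₀ (by positivity)]
    nlinarith [mul_le_mul_of_nonneg_left (le_of_lt hsinh) (by linarith : (0:ℝ) ≤ 2 * M),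
      mul_le_mul_of_nonneg_left hc1 (by positivity : (0:ℝ) ≤ 2 * M * D)]
  linarith

lemma hc_core {R δ : ℝ} (hR : 0 < R) {U : Set (ℝ × ℝ)} (hU : IsOpen U)
    (hstrip : ∀ p : ℝ × ℝ, |p.1| ≤ R → p ∈ U)
    (hVU : Ioo (-(R+δ)) (R+δ) ×ˢ Ioo (-1:ℝ) 2 ⊆ U) (hδ : 0 < δ)
    {H : ℝ × ℝ → ℝ} (hH : ContDiffOn ℝ (⊤ : ℕ∞) H U)
    (hharm : ∀ p ∈ U, hcps (hcps H) p + hcpt (hcpt H) p = 0)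
    (hper : ∀ s t : ℝ, |s| ≤ R → H (s, t + 1) = H (s, t))
    (hmean : ∀ s : ℝ, |s| ≤ R → (∫ t in (0:ℝ)..1, H (s, t)) = 0) :
    IntervalIntegrable (fun s => ∫ t in (0:ℝ)..1, (H (s, t)) ^ 2) volume (-R) R ∧
    (∫ s in (-R)..R, ∫ t in (0:ℝ)..1, (H (s, t)) ^ 2) ≤
      2 * max (∫ t in (0:ℝ)..1, (H (R, t)) ^ 2) (∫ t in (0:ℝ)..1, (H (-R, t)) ^ 2) := by
  set V := Ioo (-(R+δ)) (R+δ) ×ˢ Ioo (-1:ℝ) 2 with hVdef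
  have hVopen : IsOpen V := isOpen_Ioo.prod isOpen_Ioo
  have hline : ∀ x₀ : ℝ, x₀ ∈ Icc (-R) R → ∀ t ∈ Icc (0:ℝ) 1, (x₀, t) ∈ V := by
    intro x₀ hx₀ t ht
    exact ⟨⟨by linarith [hx₀.1], by linarith [hx₀.2]⟩, ⟨by linarith [ht.1], by linarith [ht.2]⟩⟩
  -- continuity of various functions on U
  have cH : ContinuousOn H U := hH.continuousOn
  have cHs : ContinuousOn (hcps H) U := hcps_contOn hU hH
  have cHt : ContinuousOn (hcpt H) U := hcpt_contOn hU hH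
  have hHs3 : ∀ p ∈ U, ContDiffAt ℝ 3 (hcps H) p := hcps_contDiffAt hU hH
  have cHsU : ContDiffOn ℝ 3 (hcps H) U := fun p hp => (hHs3 p hp).contDiffWithinAt
  have cHss : ContinuousOn (hcps (hcps H)) U := by
    intro p hp
    have h1 : ContDiffAt ℝ 1 (fderiv ℝ (hcps H)) p :=
      (hHs3 p hp).fderiv_right (by norm_cast)
    exact (h1.clm_apply contDiffAt_const).continuousAt.continuousWithinAt
  have cHttU : ContinuousOn (hcpt (hcpt H)) U := by
    have hHt3 : ∀ p ∈ U, ContDiffAt ℝ 3 (hcpt H) p := hcpt_contDiffAt hU hH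
    intro p hp
    have h1 : ContDiffAt ℝ 1 (fderiv ℝ (hcpt H)) p :=
      (hHt3 p hp).fderiv_right (by norm_cast)
    exact (h1.clm_apply contDiffAt_const).continuousAt.continuousWithinAt
  -- slice derivatives of hcps H
  have slice_ss : ∀ p ∈ U, HasDerivAt (fun s => hcps H (s, p.2)) (hcps (hcps H) p) p.1 := by
    rintro ⟨p1, p2⟩ hp
    have hD : HasFDerivAt (hcps H) (fderiv ℝ (hcps H) (p1, p2)) (p1, p2) :=
      (((hHs3 (p1,p2) hp).of_le (by norm_num : (1 : WithTop ℕ∞) ≤ 3)).differentiableAt (by norm_num)).hasFDerivAt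
    have hl : HasDerivAt (fun s : ℝ => (s, p2)) ((1:ℝ), (0:ℝ)) p1 :=
      (hasDerivAt_id p1).prodMk (hasDerivAt_const p1 p2)
    exact hD.comp_hasDerivAt p1 hl
  have slice_tt : ∀ p ∈ U, HasDerivAt (fun t => hcpt H (p.1, t)) (hcpt (hcpt H) p) p.2 := by
    rintro ⟨p1, p2⟩ hp
    have hHt3 : ContDiffAt ℝ 3 (hcpt H) (p1, p2) := hcpt_contDiffAt hU hH _ hp
    have hD : HasFDerivAt (hcpt H) (fderiv ℝ (hcpt H) (p1, p2)) (p1, p2) :=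
      ((hHt3.of_le (by norm_num : (1 : WithTop ℕ∞) ≤ 3)).differentiableAt (by norm_num)).hasFDerivAt
    have hl : HasDerivAt (fun t : ℝ => (p1, t)) ((0:ℝ), (1:ℝ)) p2 :=
      (hasDerivAt_const p2 p1).prodMk (hasDerivAt_id p2)
    exact hD.comp_hasDerivAt p2 hl
  -- slice continuity on full lines
  have sliceCont : ∀ (F : ℝ × ℝ → ℝ), ContinuousOn F U → ∀ s : ℝ, |s| ≤ R →
      Continuous (fun t => F (s, t)) := by
    intro F hF s hs
    rw [continuous_iff_continuousAt]
    intro t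
    have : ContinuousAt F (s, t) := hF.continuousAt (hU.mem_nhds (hstrip (s, t) hs))
    exact this.comp ((continuous_const.prodMk continuous_id).continuousAt)
  -- derivative of hcpt H in t is periodic
  have hpt_per : ∀ s t : ℝ, |s| ≤ R → hcpt H (s, t + 1) = hcpt H (s, t) := by
    intro s t hs
    have h1 : HasDerivAt (fun x => H (s, x + 1)) (hcpt H (s, t + 1)) t := by
      simpa [Function.comp_def] using (hc_slice_t hU hH (s, t + 1) (hstrip _ hs)).comp t
        ((hasDerivAt_id t).add_const 1)
    have h2 : HasDerivAt (fun x => H (s, x + 1)) (hcpt H (s, t)) t := by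
      have he : (fun x => H (s, x + 1)) = (fun x => H (s, x)) :=
        funext fun x => hper s x hs
      rw [he]
      exact hc_slice_t hU hH (s, t) (hstrip _ hs)
    exact h1.unique h2
  -- u and its derivatives
  set u := fun s => ∫ t in (0:ℝ)..1, (H (s, t)) ^ 2 with hudef
  set u₁ := fun s => ∫ t in (0:ℝ)..1, 2 * H (s, t) * hcps H (s, t) with hu₁def
  set u₂ := fun s => ∫ t in (0:ℝ)..1, (2 * (hcps H (s, t)) ^ 2
      + 2 * (H (s, t) * hcps (hcps H) (s, t))) with hu₂def
  have hd1 : ∀ s ∈ Icc (-R) R, HasDerivAt u (u₁ s) s := by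
    intro s hs
    apply hc_leibniz hVopen (hline s hs) ((cH.mono hVU).fun_pow 2)
      ((continuousOn_const.fun_mul (cH.mono hVU)).fun_mul (cHs.mono hVU))
    intro p hp
    have h := (hc_slice_s hU hH p (hVU hp)).fun_pow 2
    simpa using h
  have hd2 : ∀ s ∈ Icc (-R) R, HasDerivAt u₁ (u₂ s) s := by
    intro s hs
    apply hc_leibniz hVopen (hline s hs)
      ((continuousOn_const.fun_mul (cH.mono hVU)).fun_mul (cHs.mono hVU))
      ((continuousOn_const.fun_mul ((cHs.mono hVU).fun_pow 2)).fun_add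
        (continuousOn_const.fun_mul ((cH.mono hVU).fun_mul (cHss.mono hVU))))
    rintro ⟨p1, p2⟩ hp
    have h1 := (hc_slice_s hU hH (p1, p2) (hVU hp)).fun_mul (slice_ss (p1, p2) (hVU hp))
    have h2 : HasDerivAt (fun y => 2 * H (y, p2) * hcps H (y, p2))
        (2 * (hcps H (p1, p2) * hcps H (p1, p2) + H (p1, p2) * hcps (hcps H) (p1, p2))) p1 := by
      simpa [mul_assoc] using h1.const_mul 2
    convert h2 using 1
    ring
  have hnn : ∀ s ∈ Icc (-R) R, 0 ≤ u s := by
    intro s _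
    exact intervalIntegral.integral_nonneg (by norm_num) (fun t _ => sq_nonneg _)
  -- the differential inequality
  have hui : ∀ s ∈ Icc (-R) R, 2 * u s ≤ u₂ s := by
    intro s hs
    have hsR : |s| ≤ R := abs_le.mpr ⟨hs.1, hs.2⟩
    have hUline : ∀ t : ℝ, (s, t) ∈ U := fun t => hstrip (s, t) hsR
    have contH := sliceCont H cH s hsR
    have contHs := sliceCont (hcps H) cHs s hsR
    have contHt := sliceCont (hcpt H) cHt s hsR
    have contHss := sliceCont (hcps (hcps H)) cHss s hsR
    have contHtt := sliceCont (hcpt (hcpt H)) cHttU s hsR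
    -- integration by parts : ∫ H * Htt = -∫ Ht^2
    have hparts : (∫ t in (0:ℝ)..1, H (s, t) * hcpt (hcpt H) (s, t))
        = -∫ t in (0:ℝ)..1, (hcpt H (s, t)) ^ 2 := by
      have h := intervalIntegral.integral_mul_deriv_eq_deriv_mul
        (u := fun t => H (s, t)) (u' := fun t => hcpt H (s, t))
        (v := fun t => hcpt H (s, t)) (v' := fun t => hcpt (hcpt H) (s, t))
        (a := 0) (b := 1)
        (fun t _ => hc_slice_t hU hH (s, t) (hUline t))
        (fun t _ => slice_tt (s, t) (hUline t))
        (contHt.intervalIntegrable _ _) (contHtt.intervalIntegrable _ _)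
      have hb : H (s, 1) = H (s, 0) := by simpa using hper s 0 hsR
      have hbt : hcpt H (s, 1) = hcpt H (s, 0) := by simpa using hpt_per s 0 hsR
      have hsq : (∫ t in (0:ℝ)..1, hcpt H (s, t) * hcpt H (s, t))
          = ∫ t in (0:ℝ)..1, (hcpt H (s, t)) ^ 2 :=
        intervalIntegral.integral_congr (fun t _ => by ring)
      beta_reduce at h
      rw [hb, hbt, hsq] at h
      rw [h]
      ring
    -- harmonicity : ∫ H * Hss = ∫ Ht^2
    have hHss : (∫ t in (0:ℝ)..1, H (s, t) * hcps (hcps H) (s, t))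
        = ∫ t in (0:ℝ)..1, (hcpt H (s, t)) ^ 2 := by
      have he : ∀ t ∈ uIcc (0:ℝ) 1, H (s, t) * hcps (hcps H) (s, t)
          = -(H (s, t) * hcpt (hcpt H) (s, t)) := by
        intro t _
        have h2 : hcps (hcps H) (s, t) = -hcpt (hcpt H) (s, t) := by
          linarith [hharm (s, t) (hUline t)]
        rw [h2]
        ring
      rw [intervalIntegral.integral_congr he, intervalIntegral.integral_neg, hparts]
      ring
    -- Poincaré
    have hpoin : (∫ t in (0:ℝ)..1, (H (s, t)) ^ 2) ≤ ∫ t in (0:ℝ)..1, (hcpt H (s, t)) ^ 2 :=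
      hc_poincare (fun t => hc_slice_t hU hH (s, t) (hUline t)) contHt
        (fun t => hper s t hsR) (hmean s hsR)
    -- assemble
    have hsplit : u₂ s = (∫ t in (0:ℝ)..1, 2 * (hcps H (s, t)) ^ 2)
        + 2 * ∫ t in (0:ℝ)..1, H (s, t) * hcps (hcps H) (s, t) := by
      simp only [hu₂def]
      rw [intervalIntegral.integral_add ((continuous_const.fun_mul (contHs.fun_pow 2)).intervalIntegrable _ _)
        ((continuous_const.fun_mul (contH.fun_mul contHss)).intervalIntegrable _ _),
        intervalIntegral.integral_const_mul, intervalIntegral.integral_const_mul]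
    have hfirst : 0 ≤ ∫ t in (0:ℝ)..1, 2 * (hcps H (s, t)) ^ 2 :=
      intervalIntegral.integral_nonneg (by norm_num) (fun t _ => by positivity)
    simp only [hudef]
    rw [hsplit, hHss]
    linarith
  -- conclude
  have hIcc : uIcc (-R) R = Icc (-R) R := uIcc_of_le (by linarith)
  have hucont : ContinuousOn u (Icc (-R) R) :=
    fun s hs => (hd1 s hs).continuousAt.continuousWithinAt
  have hint : IntervalIntegrable u volume (-R) R := by
    apply ContinuousOn.intervalIntegrable
    rwa [hIcc]
  exact ⟨hint, hc_comparison hR hd1 hd2 hnn hui⟩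

lemma hc_sqrt_add_le {x y : ℝ} (hx : 0 ≤ x) (hy : 0 ≤ y) :
    Real.sqrt (x + y) ≤ Real.sqrt x + Real.sqrt y := by
  have h := Real.sqrt_le_sqrt (show x + y ≤ (Real.sqrt x + Real.sqrt y) ^ 2 by
    nlinarith [Real.sq_sqrt hx, Real.sq_sqrt hy, Real.sqrt_nonneg x, Real.sqrt_nonneg y])
  rwa [Real.sqrt_sq (by positivity)] at h

lemma hcps_sub_const (H : ℝ × ℝ → ℝ) (c : ℝ) :
    hcps (fun q => H q - c) = hcps H := by
  funext p; unfold hcps; rw [fderiv_sub_const]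

lemma hcpt_sub_const (H : ℝ × ℝ → ℝ) (c : ℝ) :
    hcpt (fun q => H q - c) = hcpt H := by
  funext p; unfold hcpt; rw [fderiv_sub_const]

set_option maxHeartbeats 2000000 in
lemma hc_main {R : ℝ} (hR : 0 < R) {F G : ℝ × ℝ → ℝ} {U : Set (ℝ × ℝ)} (hU : IsOpen U)
    (hstrip : ∀ p : ℝ × ℝ, |p.1| ≤ R → p ∈ U)
    (hf : ContDiffOn ℝ (⊤ : ℕ∞) F U) (hg : ContDiffOn ℝ (⊤ : ℕ∞) G U)
    (hCR₁ : ∀ p ∈ U, hcps F p = -hcpt G p)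
    (hCR₂ : ∀ p ∈ U, hcpt F p = hcps G p)
    (hfper : ∀ s t : ℝ, |s| ≤ R → F (s, t + 1) = F (s, t))
    (hgper : ∀ s t : ℝ, |s| ≤ R → G (s, t + 1) = G (s, t))
    (P S : ℝ)
    (hP : P = ∫ t in (0:ℝ)..1, G (0, t))
    (hS : S = -∫ t in (0:ℝ)..1, F (0, t)) :
    |Real.sqrt (∫ s in (-R)..R, ∫ t in (0:ℝ)..1, ((F (s, t)) ^ 2 + (G (s, t)) ^ 2)) -
        Real.sqrt (2 * R * (P ^ 2 + S ^ 2))| ≤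
      12 * max (Real.sqrt (∫ t in (0:ℝ)..1, (F (R, t) + S) ^ 2))
          (Real.sqrt (∫ t in (0:ℝ)..1, (F (-R, t) + S) ^ 2)) +
        12 * max (Real.sqrt (∫ t in (0:ℝ)..1, (G (R, t) - P) ^ 2))
          (Real.sqrt (∫ t in (0:ℝ)..1, (G (-R, t) - P) ^ 2)) := by
  -- the thickened strip
  have hKU : Icc (-R) R ×ˢ Icc (-1:ℝ) 2 ⊆ U := by
    rintro ⟨a, b⟩ ⟨ha, _⟩
    exact hstrip (a, b) (abs_le.mpr ⟨ha.1, ha.2⟩)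
  obtain ⟨ε, hε, hthick⟩ :=
    (isCompact_Icc.prod isCompact_Icc).exists_thickening_subset_open hU hKU
  set δ := ε / 2 with hδdef
  have hδ : 0 < δ := half_pos hε
  have hVU : Ioo (-(R+δ)) (R+δ) ×ˢ Ioo (-1:ℝ) 2 ⊆ U := by
    rintro ⟨a, b⟩ ⟨ha, hb⟩
    apply hthick
    rw [Metric.mem_thickening_iff]
    refine ⟨(max (-R) (min a R), b), ⟨⟨le_max_left _ _,
        max_le (by linarith) (min_le_right _ _)⟩,
        ⟨le_of_lt hb.1, le_of_lt hb.2⟩⟩, ?_⟩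
    rw [Prod.dist_eq]
    have hd2 : dist b b = 0 := dist_self b
    have hd1 : dist a (max (-R) (min a R)) < ε := by
      rw [Real.dist_eq]
      rcases le_total a (-R) with h | h
      · rw [min_eq_left (by linarith), max_eq_left h]
        rw [abs_sub_comm, abs_of_nonneg (by linarith)]
        simp only [mem_Ioo] at ha
        linarith [ha.1]
      · rcases le_total a R with h2 | h2
        · rw [min_eq_left h2, max_eq_right h]
          simp [hε]
        · rw [min_eq_right h2, max_eq_right (by linarith)]
          rw [abs_of_nonneg (by linarith)]
          simp only [mem_Ioo] at ha
          linarith [ha.2]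
    rw [hd2]
    calc max (dist a (max (-R) (min a R))) 0 = dist a (max (-R) (min a R)) :=
          max_eq_left dist_nonneg
      _ < ε := hd1
  set V := Ioo (-(R+δ)) (R+δ) ×ˢ Ioo (-1:ℝ) 2 with hVdef
  have hVopen : IsOpen V := isOpen_Ioo.prod isOpen_Ioo
  have hline : ∀ x₀ : ℝ, x₀ ∈ Icc (-R) R → ∀ t ∈ Icc (0:ℝ) 1, (x₀, t) ∈ V := by
    intro x₀ hx₀ t ht
    exact ⟨⟨by linarith [hx₀.1], by linarith [hx₀.2]⟩, ⟨by linarith [ht.1], by linarith [ht.2]⟩⟩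
  -- continuity
  have cF : ContinuousOn F U := hf.continuousOn
  have cG : ContinuousOn G U := hg.continuousOn
  have cFs : ContinuousOn (hcps F) U := hcps_contOn hU hf
  have cFt : ContinuousOn (hcpt F) U := hcpt_contOn hU hf
  have cGs : ContinuousOn (hcps G) U := hcps_contOn hU hg
  have cGt : ContinuousOn (hcpt G) U := hcpt_contOn hU hg
  have sliceContU : ∀ (K : ℝ × ℝ → ℝ), ContinuousOn K U → ∀ s : ℝ, |s| ≤ R →
      Continuous (fun t => K (s, t)) := by
    intro K hK s hs
    rw [continuous_iff_continuousAt]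
    intro t
    exact (hK.continuousAt (hU.mem_nhds (hstrip (s, t) hs))).comp
      ((continuous_const.prodMk continuous_id).continuousAt)
  -- harmonicity
  have harmF : ∀ p ∈ U, hcps (hcps F) p + hcpt (hcpt F) p = 0 :=
    hc_harm_pair hU hg hCR₁ hCR₂
  have harmG : ∀ p ∈ U, hcps (hcps G) p + hcpt (hcpt G) p = 0 := by
    apply hc_harm_pair hU (hf.neg)
    · intro p hp
      rw [hcpt_neg]
      simp only
      rw [← hCR₂ p hp]
      ring
    · intro p hp
      rw [hcps_neg]
      simp only
      rw [hCR₁ p hp]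
      ring
  -- means are constant
  have habs0 : |(0:ℝ)| ≤ R := by simp; linarith
  have hmean_gen : ∀ (K L : ℝ × ℝ → ℝ), ContDiffOn ℝ (⊤ : ℕ∞) K U → ContDiffOn ℝ (⊤ : ℕ∞) L U →
      (∀ p ∈ U, hcps K p = hcpt L p) →
      (∀ s t : ℝ, |s| ≤ R → L (s, t + 1) = L (s, t)) →
      ∀ s : ℝ, |s| ≤ R →
        (∫ t in (0:ℝ)..1, K (s, t)) = ∫ t in (0:ℝ)..1, K (0, t) := by
    intro K L hK hL hKL hLper s hs
    have cK : ContinuousOn K U := hK.continuousOn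
    have cKs : ContinuousOn (hcps K) U := hcps_contOn hU hK
    have hmd : ∀ x₀ ∈ Icc (-R) R,
        HasDerivAt (fun s => ∫ t in (0:ℝ)..1, K (s, t)) 0 x₀ := by
      intro x₀ hx₀
      have habs : |x₀| ≤ R := abs_le.mpr ⟨hx₀.1, hx₀.2⟩
      have h := hc_leibniz hVopen (hline x₀ hx₀) (cK.mono hVU) (cKs.mono hVU)
        (fun p hp => hc_slice_s hU hK p (hVU hp))
      have hzero : (∫ t in (0:ℝ)..1, hcps K (x₀, t)) = 0 := by
        have he : ∀ t ∈ uIcc (0:ℝ) 1, hcps K (x₀, t) = hcpt L (x₀, t) :=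
          fun t _ => hKL (x₀, t) (hstrip _ habs)
        rw [intervalIntegral.integral_congr he]
        have hftc : (∫ t in (0:ℝ)..1, hcpt L (x₀, t)) = L (x₀, 1) - L (x₀, 0) :=
          intervalIntegral.integral_eq_sub_of_hasDerivAt
            (f := fun t => L (x₀, t)) (f' := fun t => hcpt L (x₀, t))
            (fun t _ => hc_slice_t hU hL (x₀, t) (hstrip _ habs))
            ((sliceContU (hcpt L) (hcpt_contOn hU hL) x₀ habs).intervalIntegrable _ _)
        rw [hftc]
        have : L (x₀, 1) = L (x₀, 0) := by simpa using hLper x₀ 0 habs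
        rw [this]; ring
      rwa [hzero] at h
    have hsub : uIcc 0 s ⊆ Icc (-R) R := by
      intro x hx
      rcases le_total 0 s with h | h
      · rw [uIcc_of_le h] at hx
        exact ⟨by linarith [hx.1], by linarith [hx.2, (abs_le.mp hs).2]⟩
      · rw [uIcc_of_ge h] at hx
        exact ⟨by linarith [hx.1, (abs_le.mp hs).1], by linarith [hx.2]⟩
    have hftc : (∫ x in (0:ℝ)..s, (0:ℝ))
        = (∫ t in (0:ℝ)..1, K (s, t)) - ∫ t in (0:ℝ)..1, K (0, t) := by
      exact intervalIntegral.integral_eq_sub_of_hasDerivAt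
        (fun x hx => hmd x (hsub hx)) intervalIntegrable_const
    simp only [intervalIntegral.integral_zero] at hftc
    linarith [hftc]
  have hmf : ∀ s : ℝ, |s| ≤ R → (∫ t in (0:ℝ)..1, F (s, t)) = -S := by
    intro s hs
    have h := hmean_gen F (fun q => -(G q)) hf hg.neg
      (fun p hp => by rw [hcpt_neg]; exact hCR₁ p hp)
      (fun s t hs => by rw [hgper s t hs]) s hs
    rw [h, hS, neg_neg]
  have hmg : ∀ s : ℝ, |s| ≤ R → (∫ t in (0:ℝ)..1, G (s, t)) = P := by
    intro s hs
    have h := hmean_gen G F hg hf (fun p hp => (hCR₂ p hp).symm) hfper s hs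
    rw [h]
    exact hP.symm
  -- apply the core estimate to F + S and G - P
  have harmH₁ : ∀ p ∈ U,
      hcps (hcps (fun q => F q + S)) p + hcpt (hcpt (fun q => F q + S)) p = 0 := by
    intro p hp
    rw [hcps_add_const, hcpt_add_const]
    exact harmF p hp
  have perH₁ : ∀ s t : ℝ, |s| ≤ R →
      (fun q : ℝ × ℝ => F q + S) (s, t + 1) = (fun q : ℝ × ℝ => F q + S) (s, t) := by
    intro s t hs
    simp only
    rw [hfper s t hs]
  have meanH₁ : ∀ s : ℝ, |s| ≤ R →
      (∫ t in (0:ℝ)..1, (fun q : ℝ × ℝ => F q + S) (s, t)) = 0 := by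
    intro s hs
    simp only
    rw [intervalIntegral.integral_add ((sliceContU F cF s hs).intervalIntegrable _ _)
      intervalIntegrable_const, hmf s hs]
    simp
  obtain ⟨intF, ineqF⟩ := hc_core (δ := δ) hR hU hstrip hVU hδ
    (hf.add contDiffOn_const) harmH₁ perH₁ meanH₁
  have harmH₂ : ∀ p ∈ U,
      hcps (hcps (fun q => G q - P)) p + hcpt (hcpt (fun q => G q - P)) p = 0 := by
    intro p hp
    rw [hcps_sub_const, hcpt_sub_const]
    exact harmG p hp
  have perH₂ : ∀ s t : ℝ, |s| ≤ R →
      (fun q : ℝ × ℝ => G q - P) (s, t + 1) = (fun q : ℝ × ℝ => G q - P) (s, t) := by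
    intro s t hs
    simp only
    rw [hgper s t hs]
  have meanH₂ : ∀ s : ℝ, |s| ≤ R →
      (∫ t in (0:ℝ)..1, (fun q : ℝ × ℝ => G q - P) (s, t)) = 0 := by
    intro s hs
    simp only
    rw [intervalIntegral.integral_sub ((sliceContU G cG s hs).intervalIntegrable _ _)
      intervalIntegrable_const, hmg s hs]
    simp
  obtain ⟨intG, ineqG⟩ := hc_core (δ := δ) hR hU hstrip hVU hδ
    (hg.sub contDiffOn_const) harmH₂ perH₂ meanH₂
  -- pointwise decomposition of the inner integral
  have hXeq : ∀ s : ℝ, |s| ≤ R →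
      (∫ t in (0:ℝ)..1, ((F (s, t)) ^ 2 + (G (s, t)) ^ 2))
        = (∫ t in (0:ℝ)..1, (F (s, t) + S) ^ 2)
          + ((∫ t in (0:ℝ)..1, (G (s, t) - P) ^ 2) + (S ^ 2 + P ^ 2)) := by
    intro s hs
    have cFt' : Continuous (fun t => F (s, t)) := sliceContU F cF s hs
    have cGt' : Continuous (fun t => G (s, t)) := sliceContU G cG s hs
    have h1 : (∫ t in (0:ℝ)..1, (F (s, t) + S) ^ 2)
        = (∫ t in (0:ℝ)..1, ((F (s, t)) ^ 2 + (2 * S * F (s, t) + S ^ 2))) :=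
      intervalIntegral.integral_congr (fun t _ => by ring)
    have h2 : (∫ t in (0:ℝ)..1, ((F (s, t)) ^ 2 + (2 * S * F (s, t) + S ^ 2)))
        = (∫ t in (0:ℝ)..1, (F (s, t)) ^ 2)
          + (2 * S * (∫ t in (0:ℝ)..1, F (s, t)) + S ^ 2) := by
      rw [intervalIntegral.integral_add ((cFt'.fun_pow 2).intervalIntegrable _ _)
          (((continuous_const.fun_mul cFt').fun_add continuous_const).intervalIntegrable _ _),
        intervalIntegral.integral_add ((continuous_const.fun_mul cFt').intervalIntegrable _ _)
          intervalIntegrable_const,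
        intervalIntegral.integral_const_mul, intervalIntegral.integral_const]
      simp
    have h3 : (∫ t in (0:ℝ)..1, (G (s, t) - P) ^ 2)
        = (∫ t in (0:ℝ)..1, ((G (s, t)) ^ 2 + ((-2) * P * G (s, t) + P ^ 2))) :=
      intervalIntegral.integral_congr (fun t _ => by ring)
    have h4 : (∫ t in (0:ℝ)..1, ((G (s, t)) ^ 2 + ((-2) * P * G (s, t) + P ^ 2)))
        = (∫ t in (0:ℝ)..1, (G (s, t)) ^ 2)
          + ((-2) * P * (∫ t in (0:ℝ)..1, G (s, t)) + P ^ 2) := by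
      rw [intervalIntegral.integral_add ((cGt'.fun_pow 2).intervalIntegrable _ _)
          (((continuous_const.fun_mul cGt').fun_add continuous_const).intervalIntegrable _ _),
        intervalIntegral.integral_add ((continuous_const.fun_mul cGt').intervalIntegrable _ _)
          intervalIntegrable_const,
        intervalIntegral.integral_const_mul, intervalIntegral.integral_const]
      simp
    have h5 : (∫ t in (0:ℝ)..1, ((F (s, t)) ^ 2 + (G (s, t)) ^ 2))
        = (∫ t in (0:ℝ)..1, (F (s, t)) ^ 2) + (∫ t in (0:ℝ)..1, (G (s, t)) ^ 2) :=
      intervalIntegral.integral_add ((cFt'.pow 2).intervalIntegrable _ _)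
        ((cGt'.pow 2).intervalIntegrable _ _)
    rw [h5, h1, h2, h3, h4, hmf s hs, hmg s hs]
    ring
  -- outer integral decomposition
  have houter : (∫ s in (-R)..R, ∫ t in (0:ℝ)..1, ((F (s, t)) ^ 2 + (G (s, t)) ^ 2))
      = (∫ s in (-R)..R, ∫ t in (0:ℝ)..1, (F (s, t) + S) ^ 2)
        + ((∫ s in (-R)..R, ∫ t in (0:ℝ)..1, (G (s, t) - P) ^ 2) + 2 * R * (P ^ 2 + S ^ 2)) := by
    have hcgr : (∫ s in (-R)..R, ∫ t in (0:ℝ)..1, ((F (s, t)) ^ 2 + (G (s, t)) ^ 2))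
        = ∫ s in (-R)..R, ((∫ t in (0:ℝ)..1, (F (s, t) + S) ^ 2)
          + ((∫ t in (0:ℝ)..1, (G (s, t) - P) ^ 2) + (S ^ 2 + P ^ 2))) := by
      apply intervalIntegral.integral_congr
      intro s hs
      rw [uIcc_of_le (by linarith : -R ≤ R)] at hs
      exact hXeq s (abs_le.mpr ⟨hs.1, hs.2⟩)
    rw [hcgr, intervalIntegral.integral_add intF (intG.add intervalIntegrable_const),
      intervalIntegral.integral_add intG intervalIntegrable_const,
      intervalIntegral.integral_const]
    simp only [smul_eq_mul]
    ring
  -- nonnegativity facts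
  have hAnn : 0 ≤ ∫ s in (-R)..R, ∫ t in (0:ℝ)..1, (F (s, t) + S) ^ 2 :=
    intervalIntegral.integral_nonneg (by linarith)
      (fun s _ => intervalIntegral.integral_nonneg (by norm_num) (fun t _ => sq_nonneg _))
  have hBnn : 0 ≤ ∫ s in (-R)..R, ∫ t in (0:ℝ)..1, (G (s, t) - P) ^ 2 :=
    intervalIntegral.integral_nonneg (by linarith)
      (fun s _ => intervalIntegral.integral_nonneg (by norm_num) (fun t _ => sq_nonneg _))
  have hYnn : 0 ≤ 2 * R * (P ^ 2 + S ^ 2) := by positivity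
  have hbfR : 0 ≤ ∫ t in (0:ℝ)..1, (F (R, t) + S) ^ 2 :=
    intervalIntegral.integral_nonneg (by norm_num) (fun t _ => sq_nonneg _)
  have hbfR' : 0 ≤ ∫ t in (0:ℝ)..1, (F (-R, t) + S) ^ 2 :=
    intervalIntegral.integral_nonneg (by norm_num) (fun t _ => sq_nonneg _)
  have hbgR : 0 ≤ ∫ t in (0:ℝ)..1, (G (R, t) - P) ^ 2 :=
    intervalIntegral.integral_nonneg (by norm_num) (fun t _ => sq_nonneg _)
  have hbgR' : 0 ≤ ∫ t in (0:ℝ)..1, (G (-R, t) - P) ^ 2 :=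
    intervalIntegral.integral_nonneg (by norm_num) (fun t _ => sq_nonneg _)
  -- sqrt estimates for the oscillating parts
  have hsqrt_bound : ∀ (A bR bR' : ℝ), 0 ≤ A → 0 ≤ bR → 0 ≤ bR' →
      A ≤ 2 * max bR bR' →
      Real.sqrt A ≤ 2 * max (Real.sqrt bR) (Real.sqrt bR') := by
    intro A bR bR' hA hbR hbR' hle
    have hmax : max bR bR' ≤ (max (Real.sqrt bR) (Real.sqrt bR')) ^ 2 := by
      have e1 : (Real.sqrt bR) ^ 2 = bR := Real.sq_sqrt hbR
      have e2 : (Real.sqrt bR') ^ 2 = bR' := Real.sq_sqrt hbR'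
      apply max_le
      · nlinarith [le_max_left (Real.sqrt bR) (Real.sqrt bR'), Real.sqrt_nonneg bR,
          Real.sqrt_nonneg bR', sq_nonneg (max (Real.sqrt bR) (Real.sqrt bR') - Real.sqrt bR)]
      · nlinarith [le_max_right (Real.sqrt bR) (Real.sqrt bR'), Real.sqrt_nonneg bR,
          Real.sqrt_nonneg bR', sq_nonneg (max (Real.sqrt bR) (Real.sqrt bR') - Real.sqrt bR')]
    have hmnn : 0 ≤ max (Real.sqrt bR) (Real.sqrt bR') :=
      le_trans (Real.sqrt_nonneg bR) (le_max_left _ _)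
    have h1 : A ≤ (2 * max (Real.sqrt bR) (Real.sqrt bR')) ^ 2 := by nlinarith
    calc Real.sqrt A ≤ Real.sqrt ((2 * max (Real.sqrt bR) (Real.sqrt bR')) ^ 2) :=
          Real.sqrt_le_sqrt h1
      _ = 2 * max (Real.sqrt bR) (Real.sqrt bR') := Real.sqrt_sq (by positivity)
  have hsF : Real.sqrt (∫ s in (-R)..R, ∫ t in (0:ℝ)..1, (F (s, t) + S) ^ 2)
      ≤ 2 * max (Real.sqrt (∫ t in (0:ℝ)..1, (F (R, t) + S) ^ 2))
          (Real.sqrt (∫ t in (0:ℝ)..1, (F (-R, t) + S) ^ 2)) :=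
    hsqrt_bound _ _ _ hAnn hbfR hbfR' ineqF
  have hsG : Real.sqrt (∫ s in (-R)..R, ∫ t in (0:ℝ)..1, (G (s, t) - P) ^ 2)
      ≤ 2 * max (Real.sqrt (∫ t in (0:ℝ)..1, (G (R, t) - P) ^ 2))
          (Real.sqrt (∫ t in (0:ℝ)..1, (G (-R, t) - P) ^ 2)) :=
    hsqrt_bound _ _ _ hBnn hbgR hbgR' ineqG
  -- final assembly
  set A := ∫ s in (-R)..R, ∫ t in (0:ℝ)..1, (F (s, t) + S) ^ 2 with hA
  set B := ∫ s in (-R)..R, ∫ t in (0:ℝ)..1, (G (s, t) - P) ^ 2 with hB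
  set Y := 2 * R * (P ^ 2 + S ^ 2) with hY
  rw [houter]
  have hmono : Real.sqrt Y ≤ Real.sqrt (A + (B + Y)) :=
    Real.sqrt_le_sqrt (by linarith)
  rw [abs_of_nonneg (by linarith)]
  have hsplit : Real.sqrt (A + (B + Y)) ≤ Real.sqrt A + (Real.sqrt B + Real.sqrt Y) :=
    le_trans (hc_sqrt_add_le hAnn (by linarith))
      (by linarith [hc_sqrt_add_le hBnn hYnn])
  have hmFnn : 0 ≤ max (Real.sqrt (∫ t in (0:ℝ)..1, (F (R, t) + S) ^ 2))
      (Real.sqrt (∫ t in (0:ℝ)..1, (F (-R, t) + S) ^ 2)) :=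
    le_trans (Real.sqrt_nonneg _) (le_max_left _ _)
  have hmGnn : 0 ≤ max (Real.sqrt (∫ t in (0:ℝ)..1, (G (R, t) - P) ^ 2))
      (Real.sqrt (∫ t in (0:ℝ)..1, (G (-R, t) - P) ^ 2)) :=
    le_trans (Real.sqrt_nonneg _) (le_max_left _ _)
  linarith [hsF, hsG, hmono, hsplit]

end HarmonicCylinderAux

/-- Comparison of the `L²`-norm of the holomorphic function
`F = f - i g` associated with a harmonic 1-form `η = f ds + g dt` on the cylinder
`[-R,R] × S¹` with the `L²`-norm of its constant part:
`| ‖F‖_{L²} - (2R(P²+S̃²))^{1/2} | ≤ 12 max{‖f(±R,·)+S̃‖} + 12 max{‖g(±R,·)-P‖}`. -/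
theorem harmonic_cylinder_L2_norm_comparison
    (R : ℝ) (hR : 0 < R) (f g : ℝ → ℝ → ℝ)
    (U : Set (ℝ × ℝ)) (hU : IsOpen U)
    (hUsub : {p : ℝ × ℝ | |p.1| ≤ R} ⊆ U)
    (hf : ContDiffOn ℝ (⊤ : ℕ∞) (fun p : ℝ × ℝ => f p.1 p.2) U)
    (hg : ContDiffOn ℝ (⊤ : ℕ∞) (fun p : ℝ × ℝ => g p.1 p.2) U)
    (hCR₁ : ∀ p ∈ U, deriv (fun s => f s p.2) p.1 = -deriv (fun t => g p.1 t) p.2)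
    (hCR₂ : ∀ p ∈ U, deriv (fun t => f p.1 t) p.2 = deriv (fun s => g s p.2) p.1)
    (hfper : ∀ s t : ℝ, |s| ≤ R → f s (t + 1) = f s t)
    (hgper : ∀ s t : ℝ, |s| ≤ R → g s (t + 1) = g s t)
    (P S : ℝ)
    (hP : P = ∫ t in (0 : ℝ)..1, g 0 t)
    (hS : S = -∫ t in (0 : ℝ)..1, f 0 t) :
    |Real.sqrt (∫ s in (-R)..R, ∫ t in (0 : ℝ)..1, ((f s t) ^ 2 + (g s t) ^ 2)) -
        Real.sqrt (2 * R * (P ^ 2 + S ^ 2))| ≤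
      12 * max (Real.sqrt (∫ t in (0 : ℝ)..1, (f R t + S) ^ 2))
          (Real.sqrt (∫ t in (0 : ℝ)..1, (f (-R) t + S) ^ 2)) +
        12 * max (Real.sqrt (∫ t in (0 : ℝ)..1, (g R t - P) ^ 2))
          (Real.sqrt (∫ t in (0 : ℝ)..1, (g (-R) t - P) ^ 2)) := by

  have hstrip : ∀ p : ℝ × ℝ, |p.1| ≤ R → p ∈ U := fun p hp => hUsub hp
  have hCR₁' : ∀ p ∈ U, hcps (fun p : ℝ × ℝ => f p.1 p.2) p
      = -hcpt (fun p : ℝ × ℝ => g p.1 p.2) p := by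
    intro p hp
    rw [← (hc_slice_s hU hf p hp).deriv, ← (hc_slice_t hU hg p hp).deriv]
    exact hCR₁ p hp
  have hCR₂' : ∀ p ∈ U, hcpt (fun p : ℝ × ℝ => f p.1 p.2) p
      = hcps (fun p : ℝ × ℝ => g p.1 p.2) p := by
    intro p hp
    rw [← (hc_slice_t hU hf p hp).deriv, ← (hc_slice_s hU hg p hp).deriv]
    exact hCR₂ p hp
  exact hc_main hR hU hstrip hf hg hCR₁' hCR₂'
    (fun s t hs => hfper s t hs) (fun s t hs => hgper s t hs) P S hP hS
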